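/- Let F0, F1, F2 be a positively oriented orthonormal basis of ℝ³ (F0 × F1 = F2, F1 × F2 = F0, F2 × F0 = F1), and let d > 0, β > 0, δ > 0, c₀, c₁, c₂, a₁₁, a₁₂, γ, t0 ∈ ℝ and A₀ ∈ ℝ³ orthogonal to F0. Set B := β(cos γ · F1 + sin γ · F2), ρ := −2c₂/(d²β), and define V̂₁(t) := dF0 + δ·((c₀ + c₁(t−t0) + c₂(t−t0)²)F0 + A₀ + (t−t0)(a₁₁F1 + a₁₂F2) + cos(d(t−t0))B − sin(d(t−t0))(F0 × B)). Set ĉ := δ²(4c₂² + d⁴β²) and Ĉ := δ(2c₂F0 − d·a₁₂F1 + d·a₁₁F2). Then for all s, ‖V̂₁'''(s)‖² = δ²d⁶β², and for all t ≥ t0: √ĉ · ∫_{t0}^{t} (ĉ − ⟨Ĉ, V̂₁''(s)⟩)/‖V̂₁'''(s)‖² ds = δ·√(ρ²+1)·( (t−t0)β + (a₁₁(cos(γ − d(t−t0)) − cos γ) + a₁₂(sin(γ − d(t−t0)) − sin γ))/d² ). -/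

import Mathlib

noncomputable section
open scoped RealInnerProductSpace

/-- `ℝ³` with the Euclidean inner product. -/
abbrev E3 : Type := EuclideanSpace ℝ (Fin 3)

/-- The cross product on `ℝ³`; with `⁅u,v⁆ := cross u v`, `ℝ³` is the Lie algebra `so(3)`. -/
def cross (u v : E3) : E3 :=
  (WithLp.equiv 2 (Fin 3 → ℝ)).symm
    ![u 1 * v 2 - u 2 * v 1, u 2 * v 0 - u 0 * v 2, u 0 * v 1 - u 1 * v 0]

lemma e3cross_anticomm (u v : E3) : cross u v = - cross v u := by
  ext i; fin_cases i <;> simp [cross] <;> ring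
lemma e3cross_add_right (u v w : E3) : cross u (v + w) = cross u v + cross u w := by
  ext i; fin_cases i <;> simp [cross] <;> ring
lemma e3cross_smul_right (r : ℝ) (u v : E3) : cross u (r • v) = r • cross u v := by
  ext i; fin_cases i <;> simp [cross] <;> ring
lemma inner_cross_self_left (u v : E3) : ⟪u, cross u v⟫ = 0 := by
  simp [cross, PiLp.inner_apply, Fin.sum_univ_three]; ring
lemma inner_cross_self_right (u v : E3) : ⟪v, cross u v⟫ = 0 := by
  simp [cross, PiLp.inner_apply, Fin.sum_univ_three]; ring

/-- For the first-order approximate Lie quadratic `V̂₁` (paper's Theorem 2) with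
`B = β(cos γ·F1 + sin γ·F2)` and `ρ = −2c₂/(d²β)`, the quantity `‖V̂₁'''‖²` is the constant
`δ²d⁶β²`, and the approximate phase integral
`√ĉ·∫_{t0}^{t} (ĉ − ⟨Ĉ, V̂₁''⟩)/‖V̂₁'''‖²` equals the elementary function
`δ·√(ρ²+1)·((t−t0)β + (a₁₁(cos(γ−d(t−t0)) − cos γ) + a₁₂(sin(γ−d(t−t0)) − sin γ))/d²)`. -/
theorem stmt_16 (F0 F1 F2 : E3)
    (hn0 : ‖F0‖ = 1) (hn1 : ‖F1‖ = 1) (hn2 : ‖F2‖ = 1)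
    (h01 : cross F0 F1 = F2) (h12 : cross F1 F2 = F0) (h20 : cross F2 F0 = F1)
    (d β δ : ℝ) (hd : 0 < d) (hβ : 0 < β) (hδ : 0 < δ)
    (c₀ c₁ c₂ a11 a12 γ t0 : ℝ) (A₀ : E3) (hA₀ : ⟪A₀, F0⟫ = 0)
    (B : E3) (hB : B = β • (Real.cos γ • F1 + Real.sin γ • F2))
    (ρ : ℝ) (hρ : ρ = -(2 * c₂) / (d ^ 2 * β))
    (Vhat : ℝ → E3)
    (hVhat : ∀ t : ℝ,
        Vhat t = d • F0 +
          δ • ((c₀ + c₁ * (t - t0) + c₂ * (t - t0) ^ 2) • F0 + A₀ +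
              (t - t0) • (a11 • F1 + a12 • F2) +
              Real.cos (d * (t - t0)) • B - Real.sin (d * (t - t0)) • cross F0 B))
    (chat : ℝ) (hchat : chat = δ ^ 2 * (4 * c₂ ^ 2 + d ^ 4 * β ^ 2))
    (Chat : E3) (hChat : Chat = δ • ((2 * c₂) • F0 - (d * a12) • F1 + (d * a11) • F2)) :
    (∀ s : ℝ, ‖iteratedDeriv 3 Vhat s‖ ^ 2 = δ ^ 2 * d ^ 6 * β ^ 2) ∧
      ∀ t : ℝ, t0 ≤ t →
        Real.sqrt chat *
            ∫ s in t0..t,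
              (chat - ⟪Chat, iteratedDeriv 2 Vhat s⟫) / ‖iteratedDeriv 3 Vhat s‖ ^ 2 =
          δ * Real.sqrt (ρ ^ 2 + 1) *
            ((t - t0) * β +
              (a11 * (Real.cos (γ - d * (t - t0)) - Real.cos γ) +
                  a12 * (Real.sin (γ - d * (t - t0)) - Real.sin γ)) / d ^ 2) := by
  have hd' : d ≠ 0 := ne_of_gt hd
  have hβ' : β ≠ 0 := ne_of_gt hβ
  have hδ' : δ ≠ 0 := ne_of_gt hδ
  set C : E3 := cross F0 B with hCdef
  -- inner product facts
  have e00 : ⟪F0, F0⟫ = 1 := by rw [real_inner_self_eq_norm_sq, hn0]; norm_num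
  have e11 : ⟪F1, F1⟫ = 1 := by rw [real_inner_self_eq_norm_sq, hn1]; norm_num
  have e22 : ⟪F2, F2⟫ = 1 := by rw [real_inner_self_eq_norm_sq, hn2]; norm_num
  have e01 : ⟪F0, F1⟫ = 0 := by rw [← h20]; exact inner_cross_self_right F2 F0
  have e02 : ⟪F0, F2⟫ = 0 := by rw [← h01]; exact inner_cross_self_left F0 F1
  have e12 : ⟪F1, F2⟫ = 0 := by rw [← h01]; exact inner_cross_self_right F0 F1
  have e10 : ⟪F1, F0⟫ = 0 := by rw [real_inner_comm]; exact e01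
  have e20 : ⟪F2, F0⟫ = 0 := by rw [real_inner_comm]; exact e02
  have e21 : ⟪F2, F1⟫ = 0 := by rw [real_inner_comm]; exact e12
  have hF02 : cross F0 F2 = -F1 := by rw [e3cross_anticomm, h20]
  have hCeq : C = β • (Real.cos γ • F2 - Real.sin γ • F1) := by
    rw [hCdef, hB, e3cross_smul_right, e3cross_add_right, e3cross_smul_right,
      e3cross_smul_right, h01, hF02]
    module
  -- basic scalar derivative helpers
  have hu : ∀ s : ℝ, HasDerivAt (fun t : ℝ => t - t0) 1 s := fun s =>
    (hasDerivAt_id s).sub_const t0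
  have hdu : ∀ s : ℝ, HasDerivAt (fun t : ℝ => d * (t - t0)) (d * 1) s := fun s =>
    (hu s).const_mul d
  have hcos : ∀ s : ℝ, HasDerivAt (fun t : ℝ => Real.cos (d * (t - t0)))
      (-Real.sin (d*(s-t0)) * (d*1)) s := fun s => (Real.hasDerivAt_cos _).comp s (hdu s)
  have hsin : ∀ s : ℝ, HasDerivAt (fun t : ℝ => Real.sin (d * (t - t0)))
      (Real.cos (d*(s-t0)) * (d*1)) s := fun s => (Real.hasDerivAt_sin _).comp s (hdu s)
  -- first derivative
  have hder1 : ∀ s : ℝ, HasDerivAt Vhat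
      (δ • ((c₁ + 2*c₂*(s - t0)) • F0 + (a11 • F1 + a12 • F2)
        + (-(d * Real.sin (d*(s - t0)))) • B - (d * Real.cos (d*(s - t0))) • C)) s := by
    intro s
    have hp : HasDerivAt (fun t : ℝ => c₀ + c₁ * (t - t0) + c₂ * (t-t0)^2)
        (0 + c₁ * 1 + c₂ * ((2:ℕ) * (s - t0)^(2-1) * 1)) s :=
      ((hasDerivAt_const s c₀).add ((hu s).const_mul c₁)).add (((hu s).pow 2).const_mul c₂)
    have H := (((((hp.smul_const F0).add (hasDerivAt_const s A₀)).add
        ((hu s).smul_const (a11 • F1 + a12 • F2))).add ((hcos s).smul_const B)).sub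
        ((hsin s).smul_const C)).const_smul δ |>.const_add (d • F0)
    have hfun : Vhat = fun t => d • F0 +
          δ • ((c₀ + c₁ * (t - t0) + c₂ * (t - t0) ^ 2) • F0 + A₀ +
              (t - t0) • (a11 • F1 + a12 • F2) +
              Real.cos (d * (t - t0)) • B - Real.sin (d * (t - t0)) • C) := funext hVhat
    rw [hfun]
    convert H using 1
    all_goals first | rfl | module
  -- second derivative
  have hder2 : ∀ s : ℝ, HasDerivAt (fun x : ℝ =>
      δ • ((c₁ + 2*c₂*(x - t0)) • F0 + (a11 • F1 + a12 • F2)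
        + (-(d * Real.sin (d*(x - t0)))) • B - (d * Real.cos (d*(x - t0))) • C))
      (δ • ((2*c₂) • F0 - (d^2 * Real.cos (d*(s - t0))) • B
        + (d^2 * Real.sin (d*(s - t0))) • C)) s := by
    intro s
    have hp2 : HasDerivAt (fun t : ℝ => c₁ + 2*c₂*(t - t0)) (0 + 2*c₂*1) s :=
      (hasDerivAt_const s c₁).add ((hu s).const_mul (2*c₂))
    have H := ((((hp2.smul_const F0).add (hasDerivAt_const s (a11 • F1 + a12 • F2))).add
        ((((hsin s).const_mul d).neg).smul_const B)).sub
        (((hcos s).const_mul d).smul_const C)).const_smul δ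
    convert H using 1
    all_goals first | rfl | module
  -- third derivative
  have hder3 : ∀ s : ℝ, HasDerivAt (fun x : ℝ =>
      δ • ((2*c₂) • F0 - (d^2 * Real.cos (d*(x - t0))) • B
        + (d^2 * Real.sin (d*(x - t0))) • C))
      (δ • ((d^3 * Real.sin (d*(s - t0))) • B + (d^3 * Real.cos (d*(s - t0))) • C)) s := by
    intro s
    have H := (((hasDerivAt_const s ((2*c₂) • F0)).sub
        (((hcos s).const_mul (d^2)).smul_const B)).add
        (((hsin s).const_mul (d^2)).smul_const C)).const_smul δ
    convert H using 1
    all_goals first | rfl | module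
  have hI2 : iteratedDeriv 2 Vhat = fun s =>
      δ • ((2*c₂) • F0 - (d^2 * Real.cos (d*(s - t0))) • B
        + (d^2 * Real.sin (d*(s - t0))) • C) := by
    rw [iteratedDeriv_succ, iteratedDeriv_one,
      funext fun s => (hder1 s).deriv]
    exact funext fun s => (hder2 s).deriv
  have hI3 : iteratedDeriv 3 Vhat = fun s =>
      δ • ((d^3 * Real.sin (d*(s - t0))) • B + (d^3 * Real.cos (d*(s - t0))) • C) := by
    rw [iteratedDeriv_succ, hI2]
    exact funext fun s => (hder3 s).deriv
  -- the norm identity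
  have hnorm : ∀ s : ℝ,
      ‖δ • ((d^3 * Real.sin (d*(s - t0))) • B + (d^3 * Real.cos (d*(s - t0))) • C)‖ ^ 2
        = δ ^ 2 * d ^ 6 * β ^ 2 := by
    intro s
    rw [← real_inner_self_eq_norm_sq]
    simp only [hB, hCeq, real_inner_smul_left, real_inner_smul_right, inner_add_left,
      inner_add_right, inner_sub_left, inner_sub_right, e00, e01, e02, e10, e11, e12,
      e20, e21, e22]
    linear_combination (δ^2*d^6*β^2*(Real.sin (d*(s-t0))^2 + Real.cos (d*(s-t0))^2))
        * Real.sin_sq_add_cos_sq γ + (δ^2*d^6*β^2) * Real.sin_sq_add_cos_sq (d*(s-t0))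
  -- the inner product with Chat
  have hip : ∀ s : ℝ,
      ⟪Chat, δ • ((2*c₂) • F0 - (d^2 * Real.cos (d*(s - t0))) • B
        + (d^2 * Real.sin (d*(s - t0))) • C)⟫
      = δ^2 * (4*c₂^2) + δ^2 * d^3 * β *
          (a12 * Real.cos (γ - d*(s - t0)) - a11 * Real.sin (γ - d*(s - t0))) := by
    intro s
    rw [hChat]
    simp only [hB, hCeq, real_inner_smul_left, real_inner_smul_right, inner_add_left,
      inner_add_right, inner_sub_left, inner_sub_right, e00, e01, e02, e10, e11, e12,
      e20, e21, e22]
    rw [Real.cos_sub, Real.sin_sub]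
    ring
  constructor
  · intro s; rw [hI3]; exact hnorm s
  · intro t ht
    rw [hI2, hI3]
    -- integrand simplification
    have hg : ∀ s : ℝ,
        (chat - ⟪Chat, δ • ((2*c₂) • F0 - (d^2 * Real.cos (d*(s - t0))) • B
          + (d^2 * Real.sin (d*(s - t0))) • C)⟫)
          / ‖δ • ((d^3 * Real.sin (d*(s - t0))) • B + (d^3 * Real.cos (d*(s - t0))) • C)‖ ^ 2
        = (d*β - a12 * Real.cos (γ - d*(s - t0)) + a11 * Real.sin (γ - d*(s - t0)))
            / (d^3*β) := by
      intro s
      rw [hip s, hnorm s, hchat]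
      field_simp
      ring
    -- antiderivative
    have hG : ∀ s : ℝ, HasDerivAt (fun x : ℝ =>
        ((x - t0)*(d*β) + (a12*(Real.sin (γ - d*(x - t0)) - Real.sin γ))/d
          + (a11*(Real.cos (γ - d*(x - t0)) - Real.cos γ))/d) / (d^3*β))
        ((d*β - a12 * Real.cos (γ - d*(s - t0)) + a11 * Real.sin (γ - d*(s - t0)))
            / (d^3*β)) s := by
      intro s
      have hw : HasDerivAt (fun x : ℝ => γ - d*(x - t0)) (-(d*1)) s := (hdu s).const_sub γ
      have hc : HasDerivAt (fun x : ℝ => Real.cos (γ - d*(x - t0)))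
          (-Real.sin (γ - d*(s - t0)) * -(d*1)) s := (Real.hasDerivAt_cos _).comp s hw
      have hs2 : HasDerivAt (fun x : ℝ => Real.sin (γ - d*(x - t0)))
          (Real.cos (γ - d*(s - t0)) * -(d*1)) s := (Real.hasDerivAt_sin _).comp s hw
      have H := ((((hu s).mul_const (d*β)).add
          (((hs2.sub_const (Real.sin γ)).const_mul a12).div_const d)).add
          (((hc.sub_const (Real.cos γ)).const_mul a11).div_const d)).div_const (d^3*β)
      convert H using 1
      all_goals first | rfl | (field_simp; ring)
    have hcont : IntervalIntegrable (fun s : ℝ =>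
        (d*β - a12 * Real.cos (γ - d*(s - t0)) + a11 * Real.sin (γ - d*(s - t0)))
          / (d^3*β)) MeasureTheory.volume t0 t := by
      apply Continuous.intervalIntegrable
      apply Continuous.div_const
      fun_prop
    have hInt : ∫ s in t0..t,
        (chat - ⟪Chat, δ • ((2*c₂) • F0 - (d^2 * Real.cos (d*(s - t0))) • B
          + (d^2 * Real.sin (d*(s - t0))) • C)⟫)
          / ‖δ • ((d^3 * Real.sin (d*(s - t0))) • B + (d^3 * Real.cos (d*(s - t0))) • C)‖ ^ 2
        = ((t - t0)*(d*β) + (a12*(Real.sin (γ - d*(t - t0)) - Real.sin γ))/d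
            + (a11*(Real.cos (γ - d*(t - t0)) - Real.cos γ))/d) / (d^3*β)
          - ((t0 - t0)*(d*β) + (a12*(Real.sin (γ - d*(t0 - t0)) - Real.sin γ))/d
            + (a11*(Real.cos (γ - d*(t0 - t0)) - Real.cos γ))/d) / (d^3*β) := by
      rw [intervalIntegral.integral_congr (g := fun s =>
        (d*β - a12 * Real.cos (γ - d*(s - t0)) + a11 * Real.sin (γ - d*(s - t0)))
          / (d^3*β)) (fun s _ => hg s)]
      exact intervalIntegral.integral_eq_sub_of_hasDerivAt (fun x _ => hG x) hcont
    rw [hInt]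
    -- final algebra with square roots
    have hsq : Real.sqrt chat = δ * (Real.sqrt (ρ^2+1) * (d^2*β)) := by
      have h2 : Real.sqrt (ρ^2+1) * (d^2*β) = Real.sqrt (4*c₂^2 + d^4*β^2) := by
        rw [show (4*c₂^2 + d^4*β^2) = (ρ^2+1)*(d^2*β)^2 by rw [hρ]; field_simp; ring,
          Real.sqrt_mul (by positivity), Real.sqrt_sq (by positivity)]
      rw [h2, hchat, Real.sqrt_mul (sq_nonneg δ), Real.sqrt_sq hδ.le]
    rw [hsq]
    field_simp
    ring
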